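/- If a coalition structure π maximizes social welfare among all coalition structures, then for every payoff allocation x for π, no set of players S admits an o-profitable deviation on (π, x); that is, (π, x) is o-stable (lies in the o-core). -/

import Mathlib

/-- `π` is a (discrete) coalition structure for `N` players with resource bound `R`:
a finite multiset of nonzero resource vectors (each entry `≤ R`) whose componentwise
sum is at most `R` for every player. -/
def IsCoalitionStructure (N R : ℕ) (π : Multiset (Fin N → ℕ)) : Prop :=
  (∀ r ∈ π, r ≠ 0 ∧ ∀ i, r i ≤ R) ∧ ∀ i : Fin N, (π.map (fun r => r i)).sum ≤ R

/-- `x` is a payoff allocation for `π` with respect to the value function `v`. -/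
def IsPayoffAllocation {N : ℕ} (v : (Fin N → ℕ) → ℝ) (π : Multiset (Fin N → ℕ))
    (x : (Fin N → ℕ) → Fin N → ℝ) : Prop :=
  ∀ r ∈ π, ((∑ i, x r i) = v r ∧ ∀ i, r i = 0 → x r i = 0)

/-- Player `i`'s total payoff `p_i(π, x)`. -/
noncomputable def totalPayoff {N : ℕ} (π : Multiset (Fin N → ℕ))
    (x : (Fin N → ℕ) → Fin N → ℝ) (i : Fin N) : ℝ :=
  (π.map (fun r => x r i)).sum

/-- Social welfare of a coalition structure. -/
noncomputable def SW {N : ℕ} (v : (Fin N → ℕ) → ℝ) (π : Multiset (Fin N → ℕ)) : ℝ :=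
  (π.map v).sum

/-- `π|_S` : the sub-multiset of coalitions of `π` whose support is contained in `S`. -/
def inS {N : ℕ} (S : Finset (Fin N)) (π : Multiset (Fin N → ℕ)) : Multiset (Fin N → ℕ) :=
  π.filter (fun r => ∀ i, r i ≠ 0 → i ∈ S)

/-- `π \ π|_S` : the sub-multiset of coalitions of `π` involving players outside `S`. -/
def outS {N : ℕ} (S : Finset (Fin N)) (π : Multiset (Fin N → ℕ)) : Multiset (Fin N → ℕ) :=
  π.filter (fun r => ¬ ∀ i, r i ≠ 0 → i ∈ S)

/-- A deviation by the set of players `S` on the structure `π`: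
withdrawals `d r ≤ r` supported in `S` for the partially deviated coalitions
`r ∈ π \ π|_S`, and a coalition structure `πS` supported in `S` built from the
deviators' own resources `π|_S` plus the withdrawn resources. -/
def IsDeviation (N R : ℕ) (S : Finset (Fin N)) (π : Multiset (Fin N → ℕ))
    (d : (Fin N → ℕ) → (Fin N → ℕ)) (πS : Multiset (Fin N → ℕ)) : Prop :=
  (∀ r ∈ outS S π, (∀ i, d r i ≤ r i) ∧ ∀ i, d r i ≠ 0 → i ∈ S) ∧
  IsCoalitionStructure N R πS ∧
  (∀ r ∈ πS, ∀ i, r i ≠ 0 → i ∈ S) ∧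
  (∀ i : Fin N, (πS.map (fun r => r i)).sum ≤
      ((inS S π).map (fun r => r i)).sum + ((outS S π).map (fun r => d r i)).sum)

/-- The deviation `(d, πS)` by `S` on `(π, x)` is o-profitable (w.r.t. the optimistic
arbitration function). -/
def OProfitable {N : ℕ} (v : (Fin N → ℕ) → ℝ) (S : Finset (Fin N))
    (π : Multiset (Fin N → ℕ)) (x : (Fin N → ℕ) → Fin N → ℝ)
    (d : (Fin N → ℕ) → (Fin N → ℕ)) (πS : Multiset (Fin N → ℕ)) : Prop :=
  ∑ i ∈ S, totalPayoff π x i <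
    (πS.map v).sum + ((outS S π).map (fun r => v (r - d r) - ∑ i ∈ Sᶜ, x r i)).sum

/-- The coalition structure resulting from the deviation `(d, πS)` by `S` on `π`:
`πS` together with the nonzero reduced coalitions `r - d r`, `r ∈ π \ π|_S`. -/
def resultStructure {N : ℕ} (S : Finset (Fin N)) (π : Multiset (Fin N → ℕ))
    (d : (Fin N → ℕ) → (Fin N → ℕ)) (πS : Multiset (Fin N → ℕ)) : Multiset (Fin N → ℕ) :=
  πS + (((outS S π).map (fun r => r - d r)).filter (fun r => r ≠ 0))


private lemma msum_finsum {ι α : Type*} (S : Finset ι) (m : Multiset α) (f : α → ι → ℝ) :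
    (m.map (fun a => ∑ i ∈ S, f a i)).sum = ∑ i ∈ S, (m.map (fun a => f a i)).sum := by
  induction m using Multiset.induction with
  | empty => simp
  | cons a m ih => simp [ih, Finset.sum_add_distrib]

private lemma msum_sub {α : Type*} (m : Multiset α) (f g : α → ℝ) :
    (m.map (fun a => f a - g a)).sum = (m.map f).sum - (m.map g).sum := by
  induction m using Multiset.induction with
  | empty => simp
  | cons a m ih => simp [ih]; ring

private lemma msum_addn {α : Type*} (m : Multiset α) (f g : α → ℕ) :
    (m.map (fun a => f a + g a)).sum = (m.map f).sum + (m.map g).sum := by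
  induction m using Multiset.induction with
  | empty => simp
  | cons a m ih => simp [ih]; ring

/-- A coalition structure maximizing social welfare is o-stable:
no set of players admits an o-profitable deviation, for any payoff allocation. -/
theorem maximal_social_welfare_in_o_core
    (N R : ℕ) (v : (Fin N → ℕ) → ℝ) (hv : ∀ r, 0 ≤ v r) (hv0 : v 0 = 0)
    (π : Multiset (Fin N → ℕ)) (hπ : IsCoalitionStructure N R π)
    (hmax : ∀ π' : Multiset (Fin N → ℕ), IsCoalitionStructure N R π' → SW v π' ≤ SW v π)
    (x : (Fin N → ℕ) → Fin N → ℝ) (hx : IsPayoffAllocation v π x) :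
    ¬ ∃ (S : Finset (Fin N)) (d : (Fin N → ℕ) → (Fin N → ℕ))
        (πS : Multiset (Fin N → ℕ)),
      IsDeviation N R S π d πS ∧ OProfitable v S π x d πS := by
  rintro ⟨S, d, πS, ⟨hd, hπS, hπSsupp, hbudget⟩, hprof⟩
  classical
  set A := inS S π with hA
  set B := outS S π with hB
  have hAB : A + B = π := Multiset.filter_add_not _ _
  have hmemB : ∀ r ∈ B, r ∈ π := fun r hr => Multiset.mem_of_mem_filter hr
  have hmemA : ∀ r ∈ A, r ∈ π := fun r hr => Multiset.mem_of_mem_filter hr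
  set π' := resultStructure S π d πS with hπ'
  -- π' is a coalition structure
  have hstruct : IsCoalitionStructure N R π' := by
    constructor
    · intro r hr
      rcases Multiset.mem_add.1 hr with h | h
      · exact hπS.1 r h
      · obtain ⟨hmem, hne⟩ := Multiset.mem_filter.1 h
        obtain ⟨s, hs, rfl⟩ := Multiset.mem_map.1 hmem
        refine ⟨hne, fun i => ?_⟩
        calc (s - d s) i ≤ s i := Nat.sub_le _ _
          _ ≤ R := (hπ.1 s (hmemB s hs)).2 i
    · intro i
      have hsplit : (π'.map (fun r => r i)).sum
          = (πS.map (fun r => r i)).sum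
            + (((B.map (fun r => r - d r)).filter (fun r => r ≠ 0)).map (fun r => r i)).sum := by
        simp [hπ', resultStructure]; rfl
      have hfil : (((B.map (fun r => r - d r)).filter (fun r => r ≠ 0)).map (fun r => r i)).sum
          ≤ ((B.map (fun r => r - d r)).map (fun r => r i)).sum := by
        have hle : (B.map (fun r => r - d r)).filter (fun r => r ≠ 0) ≤ B.map (fun r => r - d r) :=
          Multiset.filter_le _ _
        obtain ⟨u, hu⟩ := Multiset.le_iff_exists_add.1 (Multiset.map_le_map hle)
        rw [hu, Multiset.sum_add]
        exact Nat.le_add_right _ _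
      have hkey : ((B.map (fun r => r - d r)).map (fun r => r i)).sum
            + (B.map (fun r => d r i)).sum = (B.map (fun r => r i)).sum := by
        rw [Multiset.map_map]
        rw [← msum_addn]
        apply congrArg
        apply Multiset.map_congr rfl
        intro r hr
        simp only [Function.comp, Pi.sub_apply]
        exact Nat.sub_add_cancel ((hd r hr).1 i)
      have hb := hbudget i
      have hπsum : ((A.map (fun r => r i)).sum + (B.map (fun r => r i)).sum)
          = (π.map (fun r => r i)).sum := by
        rw [← hAB, Multiset.map_add, Multiset.sum_add]
      calc (π'.map (fun r => r i)).sum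
          ≤ (πS.map (fun r => r i)).sum + ((B.map (fun r => r - d r)).map (fun r => r i)).sum := by
            rw [hsplit]; exact Nat.add_le_add_left hfil _
        _ ≤ ((A.map (fun r => r i)).sum + (B.map (fun r => d r i)).sum)
              + ((B.map (fun r => r - d r)).map (fun r => r i)).sum := Nat.add_le_add_right hb _
        _ = (A.map (fun r => r i)).sum
              + (((B.map (fun r => r - d r)).map (fun r => r i)).sum + (B.map (fun r => d r i)).sum) := by ring
        _ = (A.map (fun r => r i)).sum + (B.map (fun r => r i)).sum := by rw [hkey]
        _ = (π.map (fun r => r i)).sum := hπsum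
        _ ≤ R := hπ.2 i
  -- payoff identity for the deviators
  have hpay : ∑ i ∈ S, totalPayoff π x i
      = (A.map v).sum + (B.map (fun r => v r - ∑ i ∈ Sᶜ, x r i)).sum := by
    have h1 : ∑ i ∈ S, totalPayoff π x i = (π.map (fun r => ∑ i ∈ S, x r i)).sum := by
      rw [msum_finsum]; rfl
    rw [h1, ← hAB, Multiset.map_add, Multiset.sum_add]
    congr 1
    · apply congrArg
      apply Multiset.map_congr rfl
      intro r hr
      have hrA := Multiset.mem_filter.1 hr
      have hcompl : ∑ i ∈ Sᶜ, x r i = 0 := by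
        apply Finset.sum_eq_zero
        intro i hi
        have : r i = 0 := by
          by_contra hne
          exact (Finset.mem_compl.1 hi) (hrA.2 i hne)
        exact (hx r (hmemA r hr)).2 i this
      have := (hx r (hmemA r hr)).1
      have hall : ∑ i ∈ S, x r i + ∑ i ∈ Sᶜ, x r i = v r := by
        rw [Finset.sum_add_sum_compl]; exact this
      linarith
    · apply congrArg
      apply Multiset.map_congr rfl
      intro r hr
      have := (hx r (hmemB r hr)).1
      have hall : ∑ i ∈ S, x r i + ∑ i ∈ Sᶜ, x r i = v r := by
        rw [Finset.sum_add_sum_compl]; exact this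
      linarith
  -- social welfare of π' versus the deviation value
  have hSW' : SW v π' = (πS.map v).sum + (B.map (fun r => v (r - d r))).sum := by
    have hdec : (B.map (fun r => r - d r)).filter (fun r => r ≠ 0)
        + (B.map (fun r => r - d r)).filter (fun r => ¬ r ≠ 0) = B.map (fun r => r - d r) :=
      Multiset.filter_add_not _ _
    have hzero : ((((B.map (fun r => r - d r)).filter (fun r => ¬ r ≠ 0))).map v).sum = 0 := by
      apply Multiset.sum_eq_zero
      intro a ha
      obtain ⟨s, hs, rfl⟩ := Multiset.mem_map.1 ha
      have := (Multiset.mem_filter.1 hs).2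
      simp only [not_not] at this
      rw [this, hv0]
    have : (B.map (fun r => v (r - d r))).sum
        = (((B.map (fun r => r - d r)).filter (fun r => r ≠ 0)).map v).sum := by
      conv_lhs => rw [show (fun r => v (r - d r)) = v ∘ (fun r => r - d r) from rfl,
        ← Multiset.map_map, ← hdec, Multiset.map_add, Multiset.sum_add, hzero, add_zero]
    rw [this]
    simp [SW, hπ', resultStructure]; rfl
  -- conclude
  have hSWπ : SW v π = (A.map v).sum + (B.map v).sum := by
    rw [SW, ← hAB, Multiset.map_add, Multiset.sum_add]
  have hle := hmax π' hstruct
  rw [OProfitable] at hprof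
  rw [hpay] at hprof
  rw [msum_sub] at hprof
  have h2 : ((outS S π).map (fun r => v (r - d r) - ∑ i ∈ Sᶜ, x r i)).sum
      = (B.map (fun r => v (r - d r))).sum - (B.map (fun r => ∑ i ∈ Sᶜ, x r i)).sum := by
    rw [← hB, msum_sub]
  rw [h2] at hprof
  have : SW v π < SW v π' := by
    rw [hSWπ, hSW']
    linarith
  linarith
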